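/- Let G be a generic two-by-two game and let (ν,μ) be a mixed-strategy Nash equilibrium of G^Q in which each of ν and μ is supported on a set of at most four pairwise orthogonal unit quaternions. If the support of either ν or μ contains four points, then each of ν and μ assigns probability exactly 1/4 to each of four pairwise orthogonal unit quaternions. -/

import Mathlib

noncomputable section

open MeasureTheory

local notation "ℍ" => Quaternion ℝ

instance : MeasurableSpace (Quaternion ℝ) := borel _
instance : BorelSpace (Quaternion ℝ) := ⟨rfl⟩

/-- The four real coordinates of a quaternion: `p = π₁(p) + π₂(p)i + π₃(p)j + π₄(p)k`. -/
def piQ (t : Fin 4) (p : ℍ) : ℝ := ![p.re, p.imI, p.imJ, p.imK] t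

/-- The standard inner product on ℍ ≅ ℝ⁴. -/
def qinner (p q : ℍ) : ℝ := ∑ t : Fin 4, piQ t p * piQ t q

/-- The quaternions `i`, `j`, `k`. -/
def qI : ℍ := ⟨0, 1, 0, 0⟩
def qJ : ℍ := ⟨0, 0, 1, 0⟩
def qK : ℍ := ⟨0, 0, 0, 1⟩

/-- A mixed quantum strategy: a Borel probability measure on the unit quaternions. -/
def IsMixed (μ : Measure ℍ) : Prop :=
  IsProbabilityMeasure μ ∧ μ {p : ℍ | ‖p‖ = 1} = 1

/-- Quantum payoff with payoff vector `X`: `P^Q(p,q) = Σ_t π_t(pq)² X_t`. -/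
def payoff (X : Fin 4 → ℝ) (p q : ℍ) : ℝ :=
  ∑ t : Fin 4, (piQ t (p * q)) ^ 2 * X t

/-- Expected payoff of a pair of mixed strategies. -/
def payoffM (X : Fin 4 → ℝ) (ν μ : Measure ℍ) : ℝ :=
  ∫ p, ∫ q, payoff X p q ∂μ ∂ν

/-- Mixed-strategy Nash equilibrium of the quantum game with payoff vectors `X`, `Y`. -/
def IsNash (X Y : Fin 4 → ℝ) (ν μ : Measure ℍ) : Prop :=
  IsMixed ν ∧ IsMixed μ ∧
    (∀ ν' : Measure ℍ, IsMixed ν' → payoffM X ν' μ ≤ payoffM X ν μ) ∧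
    (∀ μ' : Measure ℍ, IsMixed μ' → payoffM Y ν μ' ≤ payoffM Y ν μ)

/-- Equivalence of mixed quantum strategies. -/
def StratEquiv (μ μ' : Measure ℍ) : Prop :=
  ∀ p : ℍ, ‖p‖ = 1 → ∀ t : Fin 4,
    ∫ q, (piQ t (p * q)) ^ 2 ∂μ = ∫ q, (piQ t (p * q)) ^ 2 ∂μ'

/-- Equivalence of pairs of mixed strategies: `(ν,μ) ∼ (ν',μ')` iff there is a unit
quaternion `u` with `ν' ∼ ν·u` and `μ' ∼ u⁻¹·μ`. -/
def PairEquiv (ν μ ν' μ' : Measure ℍ) : Prop :=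
  ∃ u : ℍ, ‖u‖ = 1 ∧
    StratEquiv (Measure.map (fun p => p * u) ν) ν' ∧
    StratEquiv (Measure.map (fun q => u⁻¹ * q) μ) μ'

/-- A generic two-by-two game: all payoffs distinct and all pairwise sums distinct. -/
def Generic (X Y : Fin 4 → ℝ) : Prop :=
  Function.Injective X ∧ Function.Injective Y ∧
    (∀ s t s' t' : Fin 4, s < t → s' < t' → X s + X t = X s' + X t' → s = s' ∧ t = t') ∧
    (∀ s t s' t' : Fin 4, s < t → s' < t' → Y s + Y t = Y s' + Y t' → s = s' ∧ t = t')

/-- `K(p) = π₁(p)π₂(p)π₃(p)π₄(p)`. -/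
def K (p : ℍ) : ℝ := p.re * p.imI * p.imJ * p.imK

/-- Intertwined quadruple of quaternions. -/
def Intertwined (p q r s : ℍ) : Prop :=
  ∃ α : ℝ, α ≠ 0 ∧ ∀ X Y : ℝ, α * K (X • p + Y • q) = K (X • r + Y • s)

/-- Fully intertwined quadruple of quaternions. -/
def FullyIntertwined (p q r s : ℍ) : Prop :=
  Intertwined p q r s ∧ Intertwined p r q s

/-- `p` is an optimal response for Player One to the mixed strategy `μ`. -/
def Optimal₁ (X : Fin 4 → ℝ) (μ : Measure ℍ) (p : ℍ) : Prop :=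
  ‖p‖ = 1 ∧ ∀ p' : ℍ, ‖p'‖ = 1 → ∫ q, payoff X p' q ∂μ ≤ ∫ q, payoff X p q ∂μ

/-- `q` is an optimal response for Player Two to the mixed strategy `ν`. -/
def Optimal₂ (Y : Fin 4 → ℝ) (ν : Measure ℍ) (q : ℍ) : Prop :=
  ‖q‖ = 1 ∧ ∀ q' : ℍ, ‖q'‖ = 1 → ∫ p, payoff Y p q' ∂ν ≤ ∫ p, payoff Y p q ∂ν
-- §1 coordinates
lemma qinner_expand (p q : ℍ) :
    qinner p q = p.re*q.re + p.imI*q.imI + p.imJ*q.imJ + p.imK*q.imK := by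
  simp [qinner, piQ, Fin.sum_univ_four]

lemma qinner_comm (p q : ℍ) : qinner p q = qinner q p := by
  simp only [qinner_expand]; ring

lemma qinner_self (p : ℍ) : qinner p p = ‖p‖ * ‖p‖ := by
  rw [qinner_expand, ← Quaternion.normSq_eq_norm_mul_self, Quaternion.normSq_def']; ring

lemma qinner_self_one {p : ℍ} (hp : ‖p‖ = 1) : qinner p p = 1 := by
  rw [qinner_self, hp]; norm_num

lemma norm_one_of_qinner {p : ℍ} (hp : qinner p p = 1) : ‖p‖ = 1 := by
  rw [qinner_self] at hp
  nlinarith [norm_nonneg p]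

lemma qinner_mul_right (a b c : ℍ) : qinner (a*c) (b*c) = qinner c c * qinner a b := by
  simp only [qinner_expand, Quaternion.re_mul, Quaternion.imI_mul, Quaternion.imJ_mul,
    Quaternion.imK_mul]; ring

lemma qinner_mul_left (c a b : ℍ) : qinner (c*a) (c*b) = qinner c c * qinner a b := by
  simp only [qinner_expand, Quaternion.re_mul, Quaternion.imI_mul, Quaternion.imJ_mul,
    Quaternion.imK_mul]; ring

lemma qinner_star (p q : ℍ) : qinner (star p) (star q) = qinner p q := by
  simp only [qinner_expand, Quaternion.re_star, Quaternion.imI_star, Quaternion.imJ_star,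
    Quaternion.imK_star]; ring

lemma re_star_mul (a b : ℍ) : (star a * b).re = qinner a b := by
  simp only [qinner_expand, Quaternion.re_mul, Quaternion.re_star, Quaternion.imI_star,
    Quaternion.imJ_star, Quaternion.imK_star]; ring

lemma piQ_sq_star (t : Fin 4) (x : ℍ) : (piQ t (star x))^2 = (piQ t x)^2 := by
  fin_cases t <;> simp [piQ]

lemma payoff_star (X : Fin 4 → ℝ) (p q : ℍ) : payoff X p q = payoff X (star q) (star p) := by
  unfold payoff
  refine Finset.sum_congr rfl fun t _ => ?_
  rw [← star_mul, piQ_sq_star]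

lemma payoff_mul_assoc (X : Fin 4 → ℝ) (a b c : ℍ) :
    payoff X (a*b) c = payoff X a (b*c) := by
  simp [payoff, mul_assoc]

lemma piQ_smul (t : Fin 4) (c : ℝ) (x : ℍ) : piQ t (c • x) = c * piQ t x := by
  fin_cases t <;> simp [piQ]

lemma payoff_smul (X : Fin 4 → ℝ) (c : ℝ) (p q : ℍ) :
    payoff X (c • p) q = c^2 * payoff X p q := by
  unfold payoff
  rw [Finset.mul_sum]
  refine Finset.sum_congr rfl fun t _ => ?_
  rw [smul_mul_assoc, piQ_smul]; ring

lemma payoff_zero (X : Fin 4 → ℝ) (q : ℍ) : payoff X 0 q = 0 := by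
  have h : ∀ t : Fin 4, piQ t (0:ℍ) = 0 := by
    intro t; fin_cases t <;> simp [piQ, Quaternion.re_zero, Quaternion.imI_zero, Quaternion.imJ_zero, Quaternion.imK_zero]
  simp [payoff, h]

def e4 : Fin 4 → ℍ := ![1, qI, qJ, qK]

def ONFam (f : Fin 4 → ℍ) : Prop := ∀ i j, qinner (f i) (f j) = if i = j then 1 else 0

lemma ONFam.norm_one {f : Fin 4 → ℍ} (hf : ONFam f) (i : Fin 4) : ‖f i‖ = 1 := by
  have := hf i i; simp at this; exact norm_one_of_qinner this

lemma e4_on : ONFam e4 := by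
  intro i j
  fin_cases i <;> fin_cases j <;>
    simp [e4, qinner_expand, qI, qJ, qK, qinner, piQ, Fin.sum_univ_four, Quaternion.re_one, Quaternion.imI_one, Quaternion.imJ_one, Quaternion.imK_one]

lemma piQ_eq_qinner_e4 (t : Fin 4) (x : ℍ) : piQ t x = qinner (e4 t) x := by
  fin_cases t <;> simp [piQ, e4, qinner_expand, qI, qJ, qK, qinner, Fin.sum_univ_four, Quaternion.re_one, Quaternion.imI_one, Quaternion.imJ_one, Quaternion.imK_one]

lemma mul_star_unit {r : ℍ} (hr : ‖r‖ = 1) (a : ℍ) : (a * star r) * r = a := by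
  rw [mul_assoc, Quaternion.star_mul_self, Quaternion.normSq_eq_norm_mul_self, hr]
  norm_num

lemma piQ_mul_rep (t : Fin 4) (p r : ℍ) (hr : ‖r‖ = 1) :
    piQ t (p * r) = qinner (e4 t * star r) p := by
  rw [piQ_eq_qinner_e4]
  calc qinner (e4 t) (p * r) = qinner ((e4 t * star r) * r) (p * r) := by
        rw [mul_star_unit hr]
    _ = qinner r r * qinner (e4 t * star r) p := qinner_mul_right _ _ _
    _ = qinner (e4 t * star r) p := by rw [qinner_self_one hr, one_mul]

lemma payoff_rep (X : Fin 4 → ℝ) (p r : ℍ) (hr : ‖r‖ = 1) :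
    payoff X p r = ∑ t : Fin 4, (qinner (e4 t * star r) p)^2 * X t := by
  unfold payoff
  exact Finset.sum_congr rfl fun t _ => by rw [piQ_mul_rep t p r hr]

-- §2 Parseval
lemma parseval {f : Fin 4 → ℍ} (hf : ONFam f) (w : ℍ) :
    ∑ j : Fin 4, (qinner (f j) w)^2 = qinner w w := by
  classical
  set M : Matrix (Fin 4) (Fin 4) ℝ := Matrix.of fun j t => piQ t (f j) with hM
  have hMMT : M * M.transpose = 1 := by
    ext i j
    rw [Matrix.mul_apply, Matrix.one_apply]
    have : ∑ k : Fin 4, M i k * M.transpose k j = qinner (f i) (f j) := by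
      simp [qinner, hM, Matrix.transpose_apply]
    rw [this, hf i j]
  have hMTM : M.transpose * M = 1 := mul_eq_one_comm.mp hMMT
  set wv : Fin 4 → ℝ := fun t => piQ t w with hwv
  have hmv : ∀ j, qinner (f j) w = M.mulVec wv j := by
    intro j; simp [qinner, Matrix.mulVec, dotProduct, hM, hwv]
  have key : dotProduct (M.mulVec wv) (M.mulVec wv) = dotProduct wv wv := by
    rw [Matrix.dotProduct_mulVec, ← Matrix.mulVec_transpose, Matrix.mulVec_mulVec, hMTM,
      Matrix.one_mulVec]
  calc ∑ j : Fin 4, (qinner (f j) w)^2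
      = dotProduct (M.mulVec wv) (M.mulVec wv) := by
        simp only [dotProduct, hmv, sq]
    _ = dotProduct wv wv := key
    _ = qinner w w := by simp only [dotProduct, qinner, hwv]

-- §3 trace lemmas
lemma trace_fst (X : Fin 4 → ℝ) {f : Fin 4 → ℍ} (hf : ONFam f) {r : ℍ} (hr : ‖r‖ = 1) :
    ∑ j : Fin 4, payoff X (f j) r = ∑ t : Fin 4, X t := by
  have h1 : ∀ j, payoff X (f j) r = ∑ t : Fin 4, (qinner (e4 t * star r) (f j))^2 * X t :=
    fun j => payoff_rep X (f j) r hr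
  calc ∑ j : Fin 4, payoff X (f j) r
      = ∑ t : Fin 4, (∑ j : Fin 4, (qinner (f j) (e4 t * star r))^2) * X t := by
        simp_rw [h1]
        rw [Finset.sum_comm]
        refine Finset.sum_congr rfl fun t _ => ?_
        rw [Finset.sum_mul]
        exact Finset.sum_congr rfl fun j _ => by rw [qinner_comm]
    _ = ∑ t : Fin 4, X t := by
        refine Finset.sum_congr rfl fun t _ => ?_
        rw [parseval hf]
        have : qinner (e4 t * star r) (e4 t * star r) = 1 := by
          rw [qinner_mul_left]
          have h1 : qinner (e4 t) (e4 t) = 1 := by have := e4_on t t; simpa using this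
          rw [h1, qinner_star, qinner_self_one hr]; norm_num
        rw [this, one_mul]

lemma trace_snd (X : Fin 4 → ℝ) {p : ℍ} (hp : ‖p‖ = 1) {f : Fin 4 → ℍ} (hf : ONFam f) :
    ∑ i : Fin 4, payoff X p (f i) = ∑ t : Fin 4, X t := by
  have h1 : ∀ i, payoff X p (f i) = ∑ t : Fin 4, (qinner (e4 t * star (f i)) p)^2 * X t :=
    fun i => payoff_rep X p (f i) (hf.norm_one i)
  have h2 : ∀ t : Fin 4, ONFam (fun i => e4 t * star (f i)) := by
    intro t i j
    rw [qinner_mul_left]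
    have h1' : qinner (e4 t) (e4 t) = 1 := by have := e4_on t t; simpa using this
    rw [h1', qinner_star, hf i j, one_mul]
  calc ∑ i : Fin 4, payoff X p (f i)
      = ∑ t : Fin 4, (∑ i : Fin 4, (qinner (e4 t * star (f i)) p)^2) * X t := by
        simp_rw [h1]
        rw [Finset.sum_comm]
        exact Finset.sum_congr rfl fun t _ => by rw [Finset.sum_mul]
    _ = ∑ t : Fin 4, X t := by
        refine Finset.sum_congr rfl fun t _ => ?_
        rw [parseval (h2 t), qinner_self_one hp, one_mul]
-- §4 the genericity lemma, scalar core
lemma lemA_scalar (X1 X2 X3 X4 : ℝ)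
    (hD1 : X1 + X2 ≠ X3 + X4) (hD2 : X1 + X3 ≠ X2 + X4) (hD3 : X1 + X4 ≠ X2 + X3)
    (h23 : X2 ≠ X3) (h24 : X2 ≠ X4) (h34 : X3 ≠ X4)
    (c0 c1 c2 c3 x1 y1 z1 x2 y2 z2 x3 y3 z3 : ℝ)
    (hn1 : x1*x1 + y1*y1 + z1*z1 = 1)
    (hn2 : x2*x2 + y2*y2 + z2*z2 = 1)
    (hn3 : x3*x3 + y3*y3 + z3*z3 = 1)
    (ho12 : x1*x2 + y1*y2 + z1*z2 = 0)
    (ho13 : x1*x3 + y1*y3 + z1*z3 = 0)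
    (ho23 : x2*x3 + y2*y3 + z2*z3 = 0)
    (hcs : c0 + c1 + c2 + c3 = 0)
    (hE : ∀ v1 v2 v3 v4 : ℝ,
      c0 * (v1^2 * X1 + v2^2 * X2 + v3^2 * X3 + v4^2 * X4)
      + c1 * ((v2*x1 + v3*y1 + v4*z1)^2 * X1 + (v1*x1 + v3*z1 - v4*y1)^2 * X2
          + (v1*y1 - v2*z1 + v4*x1)^2 * X3 + (v1*z1 + v2*y1 - v3*x1)^2 * X4)
      + c2 * ((v2*x2 + v3*y2 + v4*z2)^2 * X1 + (v1*x2 + v3*z2 - v4*y2)^2 * X2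
          + (v1*y2 - v2*z2 + v4*x2)^2 * X3 + (v1*z2 + v2*y2 - v3*x2)^2 * X4)
      + c3 * ((v2*x3 + v3*y3 + v4*z3)^2 * X1 + (v1*x3 + v3*z3 - v4*y3)^2 * X2
          + (v1*y3 - v2*z3 + v4*x3)^2 * X3 + (v1*z3 + v2*y3 - v3*x3)^2 * X4) = 0) :
    c0 = 0 ∧ c1 = 0 ∧ c2 = 0 ∧ c3 = 0 := by
  have k1 : (X1 + X2 - (X3 + X4)) *
      (c0 + (c1*(x1*x1) + c2*(x2*x2) + c3*(x3*x3))
          - (c1*(y1*y1) + c2*(y2*y2) + c3*(y3*y3))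
          - (c1*(z1*z1) + c2*(z2*z2) + c3*(z3*z3))) = 0 := by
    linear_combination (hE 1 0 0 0) + (hE 0 1 0 0) - (hE 0 0 1 0) - (hE 0 0 0 1)
  have k2 : (X1 + X3 - (X2 + X4)) *
      (c0 + (c1*(y1*y1) + c2*(y2*y2) + c3*(y3*y3))
          - (c1*(x1*x1) + c2*(x2*x2) + c3*(x3*x3))
          - (c1*(z1*z1) + c2*(z2*z2) + c3*(z3*z3))) = 0 := by
    linear_combination (hE 1 0 0 0) + (hE 0 0 1 0) - (hE 0 1 0 0) - (hE 0 0 0 1)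
  have k3 : (X1 + X4 - (X2 + X3)) *
      (c0 + (c1*(z1*z1) + c2*(z2*z2) + c3*(z3*z3))
          - (c1*(x1*x1) + c2*(x2*x2) + c3*(x3*x3))
          - (c1*(y1*y1) + c2*(y2*y2) + c3*(y3*y3))) = 0 := by
    linear_combination (hE 1 0 0 0) + (hE 0 0 0 1) - (hE 0 1 0 0) - (hE 0 0 1 0)
  have k1' := (mul_eq_zero.mp k1).resolve_left (sub_ne_zero.mpr hD1)
  have k2' := (mul_eq_zero.mp k2).resolve_left (sub_ne_zero.mpr hD2)
  have k3' := (mul_eq_zero.mp k3).resolve_left (sub_ne_zero.mpr hD3)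
  have hc0 : c0 = 0 := by
    linear_combination (k1' + k2' + k3' + c1*hn1 + c2*hn2 + c3*hn3 + hcs)/4
  have hS1 : c1*(x1*x1) + c2*(x2*x2) + c3*(x3*x3) = 0 := by
    linear_combination hc0 - (k2' + k3')/2
  have hS2 : c1*(y1*y1) + c2*(y2*y2) + c3*(y3*y3) = 0 := by
    linear_combination hc0 - (k1' + k3')/2
  have hS3 : c1*(z1*z1) + c2*(z2*z2) + c3*(z3*z3) = 0 := by
    linear_combination hc0 - (k1' + k2')/2
  have t1 : (X4 - X3) * (c1*(y1*z1) + c2*(y2*z2) + c3*(y3*z3)) = 0 := by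
    linear_combination ((hE 1 1 0 0) - (hE 1 0 0 0) - (hE 0 1 0 0))/2
  have t2 : (X2 - X4) * (c1*(x1*z1) + c2*(x2*z2) + c3*(x3*z3)) = 0 := by
    linear_combination ((hE 1 0 1 0) - (hE 1 0 0 0) - (hE 0 0 1 0))/2
  have t3 : (X3 - X2) * (c1*(x1*y1) + c2*(x2*y2) + c3*(x3*y3)) = 0 := by
    linear_combination ((hE 1 0 0 1) - (hE 1 0 0 0) - (hE 0 0 0 1))/2
  have hT1 := (mul_eq_zero.mp t1).resolve_left (sub_ne_zero.mpr (Ne.symm h34))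
  have hT2 := (mul_eq_zero.mp t2).resolve_left (sub_ne_zero.mpr h24)
  have hT3 := (mul_eq_zero.mp t3).resolve_left (sub_ne_zero.mpr (Ne.symm h23))
  have hc1 : c1 = 0 := by
    linear_combination (x1*x1)*hS1 + (y1*y1)*hS2 + (z1*z1)*hS3
      + 2*(x1*y1)*hT3 + 2*(x1*z1)*hT2 + 2*(y1*z1)*hT1
      - c1*(x1*x1 + y1*y1 + z1*z1 + 1)*hn1
      - c2*(x1*x2 + y1*y2 + z1*z2)*ho12
      - c3*(x1*x3 + y1*y3 + z1*z3)*ho13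
  have hc2 : c2 = 0 := by
    linear_combination (x2*x2)*hS1 + (y2*y2)*hS2 + (z2*z2)*hS3
      + 2*(x2*y2)*hT3 + 2*(x2*z2)*hT2 + 2*(y2*z2)*hT1
      - c1*(x1*x2 + y1*y2 + z1*z2)*ho12
      - c2*(x2*x2 + y2*y2 + z2*z2 + 1)*hn2
      - c3*(x2*x3 + y2*y3 + z2*z3)*ho23
  have hc3 : c3 = 0 := by
    linear_combination (x3*x3)*hS1 + (y3*y3)*hS2 + (z3*z3)*hS3
      + 2*(x3*y3)*hT3 + 2*(x3*z3)*hT2 + 2*(y3*z3)*hT1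
      - c1*(x1*x3 + y1*y3 + z1*z3)*ho13
      - c2*(x2*x3 + y2*y3 + z2*z3)*ho23
      - c3*(x3*x3 + y3*y3 + z3*z3 + 1)*hn3
  exact ⟨hc0, hc1, hc2, hc3⟩
lemma payoff_one_expand (X : Fin 4 → ℝ) (v : ℍ) :
    payoff X v 1 = v.re^2 * X 0 + v.imI^2 * X 1 + v.imJ^2 * X 2 + v.imK^2 * X 3 := by
  simp [payoff, Fin.sum_univ_four, piQ]

lemma payoff_im_expand (X : Fin 4 → ℝ) (v u : ℍ) (h : u.re = 0) :
    payoff X v u = (v.imI*u.imI + v.imJ*u.imJ + v.imK*u.imK)^2 * X 0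
      + (v.re*u.imI + v.imJ*u.imK - v.imK*u.imJ)^2 * X 1
      + (v.re*u.imJ - v.imI*u.imK + v.imK*u.imI)^2 * X 2
      + (v.re*u.imK + v.imI*u.imJ - v.imJ*u.imI)^2 * X 3 := by
  simp only [payoff, Fin.sum_univ_four, piQ, Quaternion.re_mul, Quaternion.imI_mul,
    Quaternion.imJ_mul, Quaternion.imK_mul, h, Matrix.cons_val_zero, Matrix.cons_val_one,
    Matrix.head_cons, Matrix.cons_val_two, Matrix.tail_cons, Matrix.cons_val_three]
  ring

lemma lemA (X : Fin 4 → ℝ)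
    (hD1 : X 0 + X 1 ≠ X 2 + X 3) (hD2 : X 0 + X 2 ≠ X 1 + X 3) (hD3 : X 0 + X 3 ≠ X 1 + X 2)
    (h12 : X 1 ≠ X 2) (h13 : X 1 ≠ X 3) (h23 : X 2 ≠ X 3)
    (c : Fin 4 → ℝ) (u : Fin 4 → ℍ) (hu0 : u 0 = 1)
    (hre : ∀ m : Fin 4, m ≠ 0 → (u m).re = 0)
    (hON : ONFam u) (hc : ∑ i : Fin 4, c i = 0)
    (hQ : ∀ v : ℍ, ∑ i : Fin 4, c i * payoff X v (u i) = 0) : ∀ i, c i = 0 := by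
  have hre1 : (u 1).re = 0 := hre 1 (by decide)
  have hre2 : (u 2).re = 0 := hre 2 (by decide)
  have hre3 : (u 3).re = 0 := hre 3 (by decide)
  have hnorm : ∀ m : Fin 4, m ≠ 0 →
      (u m).imI*(u m).imI + (u m).imJ*(u m).imJ + (u m).imK*(u m).imK = 1 := by
    intro m hm
    have h := hON m m
    rw [if_pos rfl, qinner_expand, hre m hm] at h
    linear_combination h
  have horth : ∀ m k : Fin 4, m ≠ 0 → k ≠ 0 → m ≠ k →
      (u m).imI*(u k).imI + (u m).imJ*(u k).imJ + (u m).imK*(u k).imK = 0 := by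
    intro m k hm hk hmk
    have h := hON m k
    rw [if_neg hmk, qinner_expand, hre m hm, hre k hk] at h
    linear_combination h
  have hcs : c 0 + c 1 + c 2 + c 3 = 0 := by
    rw [← Fin.sum_univ_four (fun i => c i)]; exact hc
  have main := lemA_scalar (X 0) (X 1) (X 2) (X 3) hD1 hD2 hD3 h12 h13 h23
    (c 0) (c 1) (c 2) (c 3)
    ((u 1).imI) ((u 1).imJ) ((u 1).imK)
    ((u 2).imI) ((u 2).imJ) ((u 2).imK)
    ((u 3).imI) ((u 3).imJ) ((u 3).imK)
    (hnorm 1 (by decide)) (hnorm 2 (by decide)) (hnorm 3 (by decide))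
    (horth 1 2 (by decide) (by decide) (by decide))
    (horth 1 3 (by decide) (by decide) (by decide))
    (horth 2 3 (by decide) (by decide) (by decide))
    hcs ?_
  · intro i
    obtain ⟨h0, h1, h2, h3⟩ := main
    fin_cases i <;> assumption
  · intro v1 v2 v3 v4
    simp only [Fin.sum_univ_four, hu0,
      payoff_one_expand, fun v => payoff_im_expand X v _ hre1, fun v => payoff_im_expand X v _ hre2,
      fun v => payoff_im_expand X v _ hre3] at hQ
    exact hQ ⟨v1, v2, v3, v4⟩
lemma main_core (X : Fin 4 → ℝ)
    (hD1 : X 0 + X 1 ≠ X 2 + X 3) (hD2 : X 0 + X 2 ≠ X 1 + X 3) (hD3 : X 0 + X 3 ≠ X 1 + X 2)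
    (h12 : X 1 ≠ X 2) (h13 : X 1 ≠ X 3) (h23 : X 2 ≠ X 3)
    (a d : Fin 4 → ℝ) (q r : Fin 4 → ℍ)
    (hqON : ONFam q) (hrON : ONFam r)
    (hsa : ∑ j : Fin 4, a j = 1) (hsd : ∑ i : Fin 4, d i = 1) (hapos : ∀ j, 0 < a j)
    (hle : ∀ p : ℍ, ‖p‖ = 1 →
      ∑ i : Fin 4, d i * payoff X p (r i) ≤
      ∑ j : Fin 4, a j * ∑ i : Fin 4, d i * payoff X (q j) (r i)) :
    ∀ i, d i = 1/4 := by
  set F : ℍ → ℝ := fun p => ∑ i : Fin 4, d i * payoff X p (r i) with hF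
  set m : ℝ := ∑ j : Fin 4, a j * F (q j) with hm
  -- trace over any orthonormal family in the first argument
  have traceF : ∀ f : Fin 4 → ℍ, ONFam f → ∑ j : Fin 4, F (f j) = ∑ t : Fin 4, X t := by
    intro f hf
    have : ∑ j : Fin 4, F (f j) = ∑ i : Fin 4, d i * (∑ j : Fin 4, payoff X (f j) (r i)) := by
      rw [hF]
      simp only
      rw [Finset.sum_comm]
      exact Finset.sum_congr rfl fun i _ => by rw [Finset.mul_sum]
    rw [this]
    have : ∀ i : Fin 4, (∑ j : Fin 4, payoff X (f j) (r i)) = ∑ t : Fin 4, X t :=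
      fun i => trace_fst X hf (hrON.norm_one i)
    simp_rw [this, ← Finset.sum_mul, hsd, one_mul]
  -- each q j attains the maximum
  have hFq : ∀ j, F (q j) = m := by
    have hle' : ∀ j, F (q j) ≤ m := fun j => hle (q j) (hqON.norm_one j)
    have hzero : ∑ j : Fin 4, a j * (m - F (q j)) = 0 := by
      have : ∑ j : Fin 4, a j * (m - F (q j))
          = (∑ j : Fin 4, a j) * m - ∑ j : Fin 4, a j * F (q j) := by
        rw [Finset.sum_mul, ← Finset.sum_sub_distrib]
        exact Finset.sum_congr rfl fun j _ => by ring
      rw [this, hsa, one_mul, ← hm, sub_self]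
    intro j
    have hterm : a j * (m - F (q j)) = 0 := by
      have := (Finset.sum_eq_zero_iff_of_nonneg (fun j _ =>
        mul_nonneg (le_of_lt (hapos j)) (sub_nonneg.mpr (hle' j)))).mp hzero j (Finset.mem_univ j)
      exact this
    have := mul_eq_zero.mp hterm
    rcases this with h | h
    · exact absurd h (ne_of_gt (hapos j))
    · linarith [sub_eq_zero.mp h]
  -- the value of m
  have hm4 : 4 * m = ∑ t : Fin 4, X t := by
    have t := traceF q hqON
    simp_rw [hFq, Finset.sum_const, Finset.card_univ, Fintype.card_fin, nsmul_eq_mul] at t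
    exact_mod_cast t
  -- every unit p attains the maximum
  have hFall : ∀ p : ℍ, ‖p‖ = 1 → F p = m := by
    intro p hp
    have honb : ONFam (fun t => p * e4 t) := by
      intro s t
      rw [qinner_mul_left, qinner_self_one hp, one_mul]
      exact e4_on s t
    have hsum4 : ∑ t : Fin 4, F (p * e4 t) = 4 * m := by rw [traceF _ honb, hm4]
    have h0 : p * e4 0 = p := by
      show p * (1 : ℍ) = p
      rw [mul_one]
    have hles : ∀ t : Fin 4, F (p * e4 t) ≤ m := by
      intro t
      have h2 := e4_on t t
      rw [if_pos rfl] at h2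
      have h1 : qinner (p * e4 t) (p * e4 t) = 1 := by
        rw [qinner_mul_left, qinner_self_one hp, one_mul, h2]
      exact hle _ (norm_one_of_qinner h1)
    rw [Fin.sum_univ_four] at hsum4
    rw [h0] at hsum4
    have l1 := hles 1; have l2 := hles 2; have l3 := hles 3
    have l0 := hles 0; rw [h0] at l0
    linarith
  -- the quadratic identity
  have hG : ∀ v : ℍ, ∑ i : Fin 4, (d i - 1/4) * payoff X v (r i) = 0 := by
    have hGunit : ∀ v : ℍ, ‖v‖ = 1 → ∑ i : Fin 4, (d i - 1/4) * payoff X v (r i) = 0 := by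
      intro v hv
      have hsplit : ∑ i : Fin 4, (d i - 1/4) * payoff X v (r i)
          = F v - (1/4) * ∑ i : Fin 4, payoff X v (r i) := by
        rw [hF]
        simp only
        rw [Finset.mul_sum, ← Finset.sum_sub_distrib]
        exact Finset.sum_congr rfl fun i _ => by ring
      rw [hsplit, hFall v hv, trace_snd X hv hrON]
      linarith
    intro v
    rcases eq_or_ne v 0 with rfl | hv
    · simp [payoff_zero]
    · have hnv : ‖v‖ ≠ 0 := norm_ne_zero_iff.mpr hv
      have hu : ‖(‖v‖⁻¹ • v)‖ = 1 := by
        rw [norm_smul, norm_inv, norm_norm, inv_mul_cancel₀ hnv]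
      have hvv : v = ‖v‖ • (‖v‖⁻¹ • v) := by
        rw [smul_smul, mul_inv_cancel₀ hnv, one_smul]
      have := hGunit _ hu
      calc ∑ i : Fin 4, (d i - 1/4) * payoff X v (r i)
          = ∑ i : Fin 4, (d i - 1/4) * (‖v‖^2 * payoff X (‖v‖⁻¹ • v) (r i)) := by
            refine Finset.sum_congr rfl fun i _ => ?_
            rw [show payoff X v (r i) = payoff X (‖v‖ • (‖v‖⁻¹ • v)) (r i) from by rw [← hvv],
              payoff_smul]
        _ = ‖v‖^2 * ∑ i : Fin 4, (d i - 1/4) * payoff X (‖v‖⁻¹ • v) (r i) := by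
            rw [Finset.mul_sum]; exact Finset.sum_congr rfl fun i _ => by ring
        _ = 0 := by rw [this, mul_zero]
  -- transfer to the canonical form and apply lemA
  set u : Fin 4 → ℍ := fun i => star (r 0) * r i with hu
  have hr0 : ‖r 0‖ = 1 := hrON.norm_one 0
  have hu0 : u 0 = 1 := by
    rw [hu]
    simp only
    rw [Quaternion.star_mul_self, Quaternion.normSq_eq_norm_mul_self, hr0]
    norm_num
  have hreu : ∀ i : Fin 4, i ≠ 0 → (u i).re = 0 := by
    intro i hi
    rw [hu]
    simp only
    rw [re_star_mul]
    have := hrON 0 i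
    rw [if_neg (Ne.symm hi)] at this
    exact this
  have huON : ONFam u := by
    intro i j
    rw [hu]
    simp only
    rw [qinner_mul_left, qinner_star, qinner_self_one hr0, one_mul]
    exact hrON i j
  have hQ : ∀ v : ℍ, ∑ i : Fin 4, (d i - 1/4) * payoff X v (u i) = 0 := by
    intro v
    have : ∀ i : Fin 4, payoff X v (u i) = payoff X (v * star (r 0)) (r i) := by
      intro i
      rw [payoff_mul_assoc]
    simp_rw [this]
    exact hG (v * star (r 0))
  have hcsum : ∑ i : Fin 4, (d i - 1/4) = 0 := by
    rw [Finset.sum_sub_distrib, hsd]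
    norm_num
  have := lemA X hD1 hD2 hD3 h12 h13 h23 (fun i => d i - 1/4) u hu0 hreu huON hcsum hQ
  intro i
  have hi := this i
  linarith
-- §5 measure-theoretic reduction
example : MeasurableSingletonClass ℍ := by infer_instance

lemma integrable_dirac' (f : ℍ → ℝ) (x : ℍ) : Integrable f (Measure.dirac x) := by
  have h : (fun _ : ℍ => f x) =ᵐ[Measure.dirac x] f := by
    rw [MeasureTheory.ae_dirac_eq]
    exact Filter.eventually_pure.mpr rfl
  exact (integrable_const (f x)).congr h

lemma integral_rep (g : Fin 4 → ENNReal) (hg : ∀ i, g i ≠ ⊤) (x : Fin 4 → ℍ) (f : ℍ → ℝ) :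
    ∫ p, f p ∂(∑ i : Fin 4, g i • Measure.dirac (x i))
      = ∑ i : Fin 4, (g i).toReal * f (x i) := by
  rw [integral_finset_sum_measure (fun i _ => (integrable_dirac' f (x i)).smul_measure (hg i))]
  refine Finset.sum_congr rfl fun i _ => ?_
  rw [integral_smul_measure, integral_dirac, smul_eq_mul]

lemma measure_rep (μ : Measure ℍ) (hprob : μ Set.univ = 1) (x : Fin 4 → ℍ)
    (hinj : Function.Injective x) (hs : μ (Set.range x) = 1) :
    μ = ∑ i : Fin 4, μ {x i} • Measure.dirac (x i) := by
  have hrm : MeasurableSet (Set.range x) := (Set.finite_range x).measurableSet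
  ext s hsm
  have hc : μ (Set.range x)ᶜ = 0 := by
    rw [measure_compl hrm (by rw [hs]; exact ENNReal.one_ne_top), hprob, hs, tsub_self]
  have h1 : μ s = μ (s ∩ Set.range x) := by
    apply le_antisymm
    · have hdiff : μ (s \ Set.range x) = 0 :=
        measure_mono_null (fun y hy => hy.2) hc
      calc μ s = μ ((s ∩ Set.range x) ∪ (s \ Set.range x)) := by
            rw [Set.inter_union_diff]
        _ ≤ μ (s ∩ Set.range x) + μ (s \ Set.range x) := measure_union_le _ _
        _ = μ (s ∩ Set.range x) := by rw [hdiff, add_zero]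
    · exact measure_mono Set.inter_subset_left
  have h2 : s ∩ Set.range x = ⋃ i ∈ (Finset.univ : Finset (Fin 4)), (s ∩ {x i}) := by
    ext y
    simp only [Set.mem_inter_iff, Set.mem_range, Set.mem_iUnion, Set.mem_singleton_iff,
      Finset.mem_univ, exists_prop, true_and]
    tauto
  have h3 : μ (s ∩ Set.range x) = ∑ i : Fin 4, μ (s ∩ {x i}) := by
    rw [h2]
    exact measure_biUnion_finset
      (fun i _ j _ hij => Set.disjoint_of_subset Set.inter_subset_right
        Set.inter_subset_right (by simpa using fun h => hij (hinj h)))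
      (fun i _ => hsm.inter (measurableSet_singleton _))
  rw [h1, h3, Measure.finset_sum_apply]
  refine Finset.sum_congr rfl fun i _ => ?_
  rw [Measure.smul_apply, Measure.dirac_apply' _ hsm, smul_eq_mul]
  by_cases hin : x i ∈ s
  · rw [Set.inter_eq_self_of_subset_right (Set.singleton_subset_iff.mpr hin),
      Set.indicator_of_mem hin, Pi.one_apply, mul_one]
  · have : s ∩ {x i} = ∅ := by
      ext y; simp only [Set.mem_inter_iff, Set.mem_singleton_iff, Set.mem_empty_iff_false,
        iff_false, not_and]
      rintro hy rfl; exact hin hy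
    rw [this, measure_empty, Set.indicator_of_notMem hin, mul_zero]

lemma isMixed_dirac {p : ℍ} (hp : ‖p‖ = 1) : IsMixed (Measure.dirac p) :=
  ⟨by infer_instance, Measure.dirac_apply_of_mem hp⟩

/-- In a Nash equilibrium where each strategy is supported on at most four
pairwise orthogonal unit quaternions, if either support contains four points then each
player plays each of four pairwise orthogonal unit quaternions with probability exactly 1/4. -/
theorem four_point_support_forces_quarter_both (X Y : Fin 4 → ℝ) (hG : Generic X Y)
    (ν μ : Measure ℍ) (hnash : IsNash X Y ν μ)
    (q r : Fin 4 → ℍ)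
    (hq1 : ∀ i, ‖q i‖ = 1) (hq2 : ∀ i j, i ≠ j → qinner (q i) (q j) = 0)
    (hr1 : ∀ i, ‖r i‖ = 1) (hr2 : ∀ i j, i ≠ j → qinner (r i) (r j) = 0)
    (hνsupp : ν (Set.range q) = 1) (hμsupp : μ (Set.range r) = 1)
    (hfour : (∀ i, ν {q i} ≠ 0) ∨ (∀ i, μ {r i} ≠ 0)) :
    (∀ i, ν {q i} = 1/4) ∧ (∀ i, μ {r i} = 1/4) := by
  obtain ⟨hGX, hGY, hGX2, hGY2⟩ := hG
  obtain ⟨⟨hνP, hν1⟩, ⟨hμP, hμ1⟩, hN1, hN2⟩ := hnash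
  haveI := hνP
  haveI := hμP
  have hqON : ONFam q := by
    intro i j
    by_cases h : i = j
    · subst h; rw [if_pos rfl]; exact qinner_self_one (hq1 i)
    · rw [if_neg h]; exact hq2 i j h
  have hrON : ONFam r := by
    intro i j
    by_cases h : i = j
    · subst h; rw [if_pos rfl]; exact qinner_self_one (hr1 i)
    · rw [if_neg h]; exact hr2 i j h
  have qinj : Function.Injective q := by
    intro i j hij
    by_contra h
    have h2 := hq2 i j h
    rw [hij, qinner_self_one (hq1 j)] at h2
    norm_num at h2
  have rinj : Function.Injective r := by
    intro i j hij
    by_contra h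
    have h2 := hr2 i j h
    rw [hij, qinner_self_one (hr1 j)] at h2
    norm_num at h2
  have hνrep := measure_rep ν measure_univ q qinj hνsupp
  have hμrep := measure_rep μ measure_univ r rinj hμsupp
  have hAne : ∀ j, ν {q j} ≠ ⊤ := fun j => measure_ne_top ν _
  have hBne : ∀ i, μ {r i} ≠ ⊤ := fun i => measure_ne_top μ _
  set a : Fin 4 → ℝ := fun j => (ν {q j}).toReal with ha
  set b : Fin 4 → ℝ := fun i => (μ {r i}).toReal with hb
  have hsumA : ∑ j : Fin 4, ν {q j} = 1 := by
    have h := congrArg (fun m : Measure ℍ => m (Set.range q)) hνrep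
    simp only [Measure.finset_sum_apply, Measure.smul_apply, smul_eq_mul] at h
    rw [hνsupp] at h
    have hd : ∀ j : Fin 4, Measure.dirac (q j) (Set.range q) = 1 :=
      fun j => Measure.dirac_apply_of_mem ⟨j, rfl⟩
    simp_rw [hd, mul_one] at h
    exact h.symm
  have hsumB : ∑ i : Fin 4, μ {r i} = 1 := by
    have h := congrArg (fun m : Measure ℍ => m (Set.range r)) hμrep
    simp only [Measure.finset_sum_apply, Measure.smul_apply, smul_eq_mul] at h
    rw [hμsupp] at h
    have hd : ∀ i : Fin 4, Measure.dirac (r i) (Set.range r) = 1 :=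
      fun i => Measure.dirac_apply_of_mem ⟨i, rfl⟩
    simp_rw [hd, mul_one] at h
    exact h.symm
  have hsa : ∑ j : Fin 4, a j = 1 := by
    rw [ha]
    simp only
    rw [← ENNReal.toReal_sum (fun j _ => hAne j), hsumA, ENNReal.toReal_one]
  have hsb : ∑ i : Fin 4, b i = 1 := by
    rw [hb]
    simp only
    rw [← ENNReal.toReal_sum (fun i _ => hBne i), hsumB, ENNReal.toReal_one]
  -- integral formulas
  have hmν : ∀ f : ℍ → ℝ, (∫ p, f p ∂ν) = ∑ j : Fin 4, a j * f (q j) := by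
    intro f
    rw [hνrep, integral_rep _ hAne]
  have hmμ : ∀ f : ℍ → ℝ, (∫ p, f p ∂μ) = ∑ i : Fin 4, b i * f (r i) := by
    intro f
    rw [hμrep, integral_rep _ hBne]
  have hinner : ∀ (Z : Fin 4 → ℝ) (p : ℍ),
      (∫ q', payoff Z p q' ∂μ) = ∑ i : Fin 4, b i * payoff Z p (r i) :=
    fun Z p => hmμ (fun q' => payoff Z p q')
  have hPM1 : payoffM X ν μ = ∑ j : Fin 4, a j * ∑ i : Fin 4, b i * payoff X (q j) (r i) := by
    unfold payoffM
    rw [hmν (fun p => ∫ q', payoff X p q' ∂μ)]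
    exact Finset.sum_congr rfl fun j _ => by rw [hinner X (q j)]
  have hPM1' : ∀ p : ℍ, payoffM X (Measure.dirac p) μ = ∑ i : Fin 4, b i * payoff X p (r i) := by
    intro p
    unfold payoffM
    rw [integral_dirac (fun p' => ∫ q', payoff X p' q' ∂μ) p]
    exact hinner X p
  have hF : ∀ p : ℍ, ‖p‖ = 1 →
      (∑ i : Fin 4, b i * payoff X p (r i)) ≤
      ∑ j : Fin 4, a j * ∑ i : Fin 4, b i * payoff X (q j) (r i) := by
    intro p hp
    have h := hN1 (Measure.dirac p) (isMixed_dirac hp)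
    rwa [hPM1, hPM1' p] at h
  have hPM2' : ∀ w : ℍ, payoffM Y ν (Measure.dirac w) = ∑ j : Fin 4, a j * payoff Y (q j) w := by
    intro w
    unfold payoffM
    have hd : ∀ p : ℍ, (∫ q', payoff Y p q' ∂(Measure.dirac w)) = payoff Y p w :=
      fun p => integral_dirac _ w
    simp_rw [hd]
    exact hmν (fun p => payoff Y p w)
  have hPM2 : payoffM Y ν μ = ∑ i : Fin 4, b i * ∑ j : Fin 4, a j * payoff Y (q j) (r i) := by
    unfold payoffM
    rw [hmν (fun p => ∫ q', payoff Y p q' ∂μ)]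
    have h1 : ∀ j : Fin 4, (∫ q', payoff Y (q j) q' ∂μ) = ∑ i : Fin 4, b i * payoff Y (q j) (r i) :=
      fun j => hinner Y (q j)
    simp_rw [h1]
    simp_rw [Finset.mul_sum]
    rw [Finset.sum_comm]
    exact Finset.sum_congr rfl fun i _ => Finset.sum_congr rfl fun j _ => by ring
  have hH : ∀ w : ℍ, ‖w‖ = 1 →
      (∑ j : Fin 4, a j * payoff Y (q j) w) ≤
      ∑ i : Fin 4, b i * ∑ j : Fin 4, a j * payoff Y (q j) (r i) := by
    intro w hw
    have h := hN2 (Measure.dirac w) (isMixed_dirac hw)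
    rwa [hPM2, hPM2' w] at h
  -- genericity
  have hD1X : X 0 + X 1 ≠ X 2 + X 3 := fun h =>
    absurd (hGX2 0 1 2 3 (by decide) (by decide) h).1 (by decide)
  have hD2X : X 0 + X 2 ≠ X 1 + X 3 := fun h =>
    absurd (hGX2 0 2 1 3 (by decide) (by decide) h).1 (by decide)
  have hD3X : X 0 + X 3 ≠ X 1 + X 2 := fun h =>
    absurd (hGX2 0 3 1 2 (by decide) (by decide) h).1 (by decide)
  have h12X : X 1 ≠ X 2 := fun h => absurd (hGX h) (by decide)
  have h13X : X 1 ≠ X 3 := fun h => absurd (hGX h) (by decide)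
  have h23X : X 2 ≠ X 3 := fun h => absurd (hGX h) (by decide)
  have hD1Y : Y 0 + Y 1 ≠ Y 2 + Y 3 := fun h =>
    absurd (hGY2 0 1 2 3 (by decide) (by decide) h).1 (by decide)
  have hD2Y : Y 0 + Y 2 ≠ Y 1 + Y 3 := fun h =>
    absurd (hGY2 0 2 1 3 (by decide) (by decide) h).1 (by decide)
  have hD3Y : Y 0 + Y 3 ≠ Y 1 + Y 2 := fun h =>
    absurd (hGY2 0 3 1 2 (by decide) (by decide) h).1 (by decide)
  have h12Y : Y 1 ≠ Y 2 := fun h => absurd (hGY h) (by decide)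
  have h13Y : Y 1 ≠ Y 3 := fun h => absurd (hGY h) (by decide)
  have h23Y : Y 2 ≠ Y 3 := fun h => absurd (hGY h) (by decide)
  -- the two core implications
  have core1 : (∀ j, 0 < a j) → ∀ i, b i = 1/4 := fun hapos =>
    main_core X hD1X hD2X hD3X h12X h13X h23X a b q r hqON hrON hsa hsb hapos hF
  have core2 : (∀ i, 0 < b i) → ∀ j, a j = 1/4 := by
    intro hbpos
    have hstarq : ONFam (fun j => star (q j)) := fun i j => by
      rw [qinner_star]; exact hqON i j
    have hstarr : ONFam (fun i => star (r i)) := fun i j => by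
      rw [qinner_star]; exact hrON i j
    apply main_core Y hD1Y hD2Y hD3Y h12Y h13Y h23Y b a
      (fun i => star (r i)) (fun j => star (q j)) hstarr hstarq hsb hsa hbpos
    intro p hp
    have hw : ‖star p‖ = 1 := by rw [norm_star]; exact hp
    have h := hH (star p) hw
    have e1 : ∀ j : Fin 4, payoff Y (q j) (star p) = payoff Y p (star (q j)) := by
      intro j
      rw [payoff_star, star_star]
    have e2 : ∀ i j : Fin 4, payoff Y (q j) (r i) = payoff Y (star (r i)) (star (q j)) :=
      fun i j => payoff_star Y (q j) (r i)
    simp_rw [e1, e2] at h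
    exact h
  have masses : (∀ j, a j = 1/4) ∧ (∀ i, b i = 1/4) := by
    rcases hfour with hν4 | hμ4
    · have hapos : ∀ j, 0 < a j := fun j => ENNReal.toReal_pos (hν4 j) (hAne j)
      have hb14 := core1 hapos
      have hbpos : ∀ i, 0 < b i := fun i => by rw [hb14 i]; norm_num
      exact ⟨core2 hbpos, hb14⟩
    · have hbpos : ∀ i, 0 < b i := fun i => ENNReal.toReal_pos (hμ4 i) (hBne i)
      have ha14 := core2 hbpos
      have hapos : ∀ j, 0 < a j := fun j => by rw [ha14 j]; norm_num
      exact ⟨ha14, core1 hapos⟩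
  have hqtop : ((1:ENNReal)/4) ≠ ⊤ := by norm_num
  have hqtr : ((1:ENNReal)/4).toReal = (1/4 : ℝ) := by norm_num
  constructor
  · intro i
    refine (ENNReal.toReal_eq_toReal_iff' (hAne i) hqtop).mp ?_
    rw [hqtr]
    exact masses.1 i
  · intro i
    refine (ENNReal.toReal_eq_toReal_iff' (hBne i) hqtop).mp ?_
    rw [hqtr]
    exact masses.2 i
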